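/- For any real numbers c < d and any function f : [c,d] → ℝ with f continuously differentiable on (c,d) and ∫_c^d (y-c)(d-y)|f'(y)|² dy < ∞, one has ∫_c^d |f(y) - (1/(d-c)) ∫_c^d f(z) dz|² dy ≤ (1/2) ∫_c^d (y-c)(d-y)|f'(y)|² dy. -/

import Mathlib

open MeasureTheory intervalIntegral Set Filter Topology

/-- Cauchy–Schwarz for interval integrals of continuous functions. -/
lemma cs_int (a b : ℝ) (hab : a ≤ b) (g h : ℝ → ℝ)
    (hg : ContinuousOn g (Set.Icc a b)) (hh : ContinuousOn h (Set.Icc a b)) :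
    (∫ x in a..b, g x * h x)^2 ≤ (∫ x in a..b, g x^2) * (∫ x in a..b, h x^2) := by
  have huIcc : Set.uIcc a b = Set.Icc a b := Set.uIcc_of_le hab
  have hg' : ContinuousOn g (Set.uIcc a b) := by rw [huIcc]; exact hg
  have hh' : ContinuousOn h (Set.uIcc a b) := by rw [huIcc]; exact hh
  have ig2 : IntervalIntegrable (fun x => g x^2) volume a b :=
    ((hg'.fun_mul hg').congr (fun x _ => by ring)).intervalIntegrable
  have ih2 : IntervalIntegrable (fun x => h x^2) volume a b :=
    ((hh'.fun_mul hh').congr (fun x _ => by ring)).intervalIntegrable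
  have igh : IntervalIntegrable (fun x => g x * h x) volume a b :=
    (hg'.mul hh').intervalIntegrable
  set A := ∫ x in a..b, g x^2 with hA
  set B := ∫ x in a..b, h x^2 with hB
  set C := ∫ x in a..b, g x * h x with hC
  have key : ∀ t : ℝ, 0 ≤ A - 2*t*C + t^2*B := by
    intro t
    have nonneg : 0 ≤ ∫ x in a..b, (g x - t * h x)^2 :=
      intervalIntegral.integral_nonneg hab (fun u _ => sq_nonneg _)
    calc (0:ℝ) ≤ ∫ x in a..b, (g x - t * h x)^2 := nonneg
      _ = ∫ x in a..b, (g x^2 - (2*t)*(g x * h x) + t^2 * h x^2) := by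
          exact intervalIntegral.integral_congr (fun x _ => by ring)
      _ = A - 2*t*C + t^2*B := by
          rw [intervalIntegral.integral_add ((ig2.sub (igh.const_mul (2*t)))) (ih2.const_mul (t^2)),
            intervalIntegral.integral_sub ig2 (igh.const_mul (2*t)),
            ]
          simp only [intervalIntegral.integral_const_mul]
          rfl
  have hBnn : (0:ℝ) ≤ B := intervalIntegral.integral_nonneg hab (fun u _ => sq_nonneg (h u))
  rcases eq_or_lt_of_le hBnn with hB0 | hB0
  · have hC0 : C = 0 := by
      by_contra hC0
      have hk := key ((A+1)/(2*C))
      rw [← hB0] at hk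
      have h2C : (2*C) ≠ 0 := by simpa using hC0
      have e1 : 2*((A+1)/(2*C))*C = A+1 := by field_simp
      have hA0 : 0 ≤ A := intervalIntegral.integral_nonneg hab (fun u _ => sq_nonneg (g u))
      nlinarith [hk, e1]
    rw [hC0, ← hB0]
    simp
  · have hk := key (C/B)
    have hBne : B ≠ 0 := ne_of_gt hB0
    have e1 : 2*(C/B)*C = 2*(C^2/B) := by field_simp
    have e2 : (C/B)^2*B = C^2/B := by field_simp
    have h2 : C^2/B ≤ A := by linarith
    have := (div_le_iff₀ hB0).mp h2
    linarith


lemma core (p q : ℝ) (hpq : p < q) (f f' : ℝ → ℝ)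
    (hd : ∀ x ∈ Set.Icc p q, HasDerivAt f (f' x) x)
    (hc : ContinuousOn f' (Set.Icc p q)) :
    (∫ y in p..q, (f y - (1/(q-p)) * ∫ z in p..q, f z)^2) ≤
      (1/2) * ∫ y in p..q, (y-p)*(q-y)*(f' y)^2 := by
  have hqp : (0:ℝ) < q - p := sub_pos.mpr hpq
  have hIcc : Set.uIcc p q = Set.Icc p q := Set.uIcc_of_le hpq.le
  have intcc : ∀ (g : ℝ → ℝ), ContinuousOn g (Set.Icc p q) → IntervalIntegrable g volume p q := by
    intro g hg
    apply ContinuousOn.intervalIntegrable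
    rwa [hIcc]
  have hfc : ContinuousOn f (Set.Icc p q) := fun x hx => (hd x hx).continuousAt.continuousWithinAt
  have hfi : IntervalIntegrable f volume p q := intcc f hfc
  set A : ℝ := (1/(q-p)) * ∫ z in p..q, f z with hAdef
  set F : ℝ → ℝ := fun y => f y - A with hFdef
  have hFc : ContinuousOn F (Set.Icc p q) := hfc.sub continuousOn_const
  have hFd : ∀ x ∈ Set.Icc p q, HasDerivAt F (f' x) x := fun x hx => (hd x hx).sub_const A
  have hFi : IntervalIntegrable F volume p q := intcc F hFc
  set G : ℝ → ℝ := fun x => ∫ t in p..x, F t with hGdef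
  have hGp : G p = 0 := intervalIntegral.integral_same
  have hGq : G q = 0 := by
    have h1 : G q = (∫ t in p..q, f t) - (q - p) * A := by
      simp only [hGdef, hFdef]
      rw [intervalIntegral.integral_sub hfi intervalIntegrable_const,
        intervalIntegral.integral_const]
      simp [smul_eq_mul]
    rw [h1, hAdef]
    field_simp
    ring
  have hGc : ContinuousOn G (Set.Icc p q) := by
    have := intervalIntegral.continuousOn_primitive_interval' hFi Set.left_mem_uIcc
    rwa [hIcc] at this
  have hGd : ∀ x ∈ Set.Ioo p q, HasDerivAt G (F x) x := by
    intro x hx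
    have hmem : Set.Icc p q ∈ 𝓝 x := Icc_mem_nhds hx.1 hx.2
    exact intervalIntegral.integral_hasDerivAt_right
      (hFi.mono_set (by rw [hIcc, Set.uIcc_of_le hx.1.le]; exact Set.Icc_subset_Icc le_rfl hx.2.le))
      ((hFc.mono Set.Ioo_subset_Icc_self).stronglyMeasurableAtFilter isOpen_Ioo x hx)
      ((hFc x (Set.Ioo_subset_Icc_self hx)).continuousAt hmem)
  -- endpoint one-sided derivatives of G
  have hmemIcc : Set.Icc p q ∈ 𝓝[>] p := by
    have hle : 𝓝[>] p ≤ 𝓝[Set.Icc p q] p := by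
      rw [nhdsWithin_Icc_eq_nhdsGE hpq]
      exact nhdsWithin_mono p Set.Ioi_subset_Ici_self
    exact hle self_mem_nhdsWithin
  have hmeasp : StronglyMeasurableAtFilter F (𝓝[Set.Ioi p] p) volume :=
    ⟨Set.Icc p q, hmemIcc, hFc.aestronglyMeasurable measurableSet_Icc⟩
  have hGdp : HasDerivWithinAt G (F p) (Set.Ici p) p := by
    apply intervalIntegral.integral_hasDerivWithinAt_right (t := Set.Ioi p)
      (IntervalIntegrable.refl) hmeasp
    have h0 : ContinuousWithinAt F (Set.Icc p q) p := hFc p (Set.left_mem_Icc.mpr hpq.le)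
    exact h0.mono_of_mem_nhdsWithin hmemIcc
  have hGdq : HasDerivWithinAt G (F q) (Set.Iic q) q := by
    apply intervalIntegral.integral_hasDerivWithinAt_right (t := Set.Iic q) hFi
    · refine ⟨Set.Icc p q, ?_, hFc.aestronglyMeasurable measurableSet_Icc⟩
      rw [← nhdsWithin_Icc_eq_nhdsLE hpq]
      exact self_mem_nhdsWithin
    · have h0 : ContinuousWithinAt F (Set.Icc p q) q := hFc q (Set.right_mem_Icc.mpr hpq.le)
      exact (continuousWithinAt_Icc_iff_Iic hpq).mp h0
  have slope_p : Tendsto (fun x => G x / (x - p)) (𝓝[>] p) (𝓝 (F p)) := by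
    have h1 := hasDerivWithinAt_iff_tendsto_slope.mp hGdp
    rw [Set.Ici_sdiff_left] at h1
    refine h1.congr (fun x => ?_)
    simp [slope_def_field, hGp]
  have slope_q : Tendsto (fun x => G x / (x - q)) (𝓝[<] q) (𝓝 (F q)) := by
    have h1 := hasDerivWithinAt_iff_tendsto_slope.mp hGdq
    rw [Set.Iic_diff_right] at h1
    refine h1.congr (fun x => ?_)
    simp [slope_def_field, hGq]
  set vB : ℝ → ℝ := fun x => (p + q - 2*x) / ((x-p)*(q-x)) * (G x)^2 with hvBdef
  have hBderiv : ∀ x ∈ Set.Ioo p q, HasDerivAt vB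
      (F x^2 - 2*((G x)^2/((x-p)*(q-x))) - (F x - (p+q-2*x)/((x-p)*(q-x)) * G x)^2) x := by
    intro x hx
    have hxp : x - p ≠ 0 := ne_of_gt (sub_pos.mpr hx.1)
    have hqx : q - x ≠ 0 := ne_of_gt (sub_pos.mpr hx.2)
    have hw : (x-p)*(q-x) ≠ 0 := mul_ne_zero hxp hqx
    have h1 : HasDerivAt (fun y : ℝ => p + q - 2*y) (-2) x := by
      simpa using (hasDerivAt_const x (p+q)).fun_sub ((hasDerivAt_id x).const_mul 2)
    have h2 : HasDerivAt (fun y : ℝ => (y-p)*(q-y)) ((q-x) + (x-p)*(-1)) x := by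
      have ha := (hasDerivAt_id x).sub_const p
      have hb := (hasDerivAt_const x q).fun_sub (hasDerivAt_id x)
      simpa using ha.fun_mul hb
    have h3 : HasDerivAt G (F x) x := hGd x hx
    have hG2 : HasDerivAt (fun y => (G y)^2) (2*G x*F x) x := by
      have := h3.fun_pow 2
      simpa [mul_comm, mul_assoc] using this
    have hquot := (h1.fun_div h2 hw).fun_mul hG2
    refine hquot.congr_deriv ?_
    field_simp
    ring
  -- boundary limits of vB
  have hBp : Tendsto vB (𝓝[Set.Ioo p q] p) (𝓝 0) := by
    have t1 : Tendsto (fun x : ℝ => p + q - 2*x) (𝓝[Set.Ioo p q] p) (𝓝 (p + q - 2*p)) :=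
      ((continuous_const.sub (continuous_const.mul continuous_id)).tendsto p).mono_left
        nhdsWithin_le_nhds
    have t2 : Tendsto (fun x => G x / (q - x)) (𝓝[Set.Ioo p q] p) (𝓝 (0 / (q - p))) := by
      apply Tendsto.div
      · have := (hGc p (Set.left_mem_Icc.mpr hpq.le)).tendsto
        rw [hGp] at this
        exact this.mono_left (nhdsWithin_mono p Set.Ioo_subset_Icc_self)
      · exact ((continuous_const.sub continuous_id).tendsto p).mono_left nhdsWithin_le_nhds
      · exact ne_of_gt hqp
    have t3 : Tendsto (fun x => G x / (x - p)) (𝓝[Set.Ioo p q] p) (𝓝 (F p)) :=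
      slope_p.mono_left (nhdsWithin_mono p Set.Ioo_subset_Ioi_self)
    have tall := (t1.mul t2).mul t3
    rw [show (p + q - 2*p) * (0 / (q-p)) * F p = 0 by ring] at tall
    apply tall.congr'
    filter_upwards [self_mem_nhdsWithin] with x hx
    have hxp : x - p ≠ 0 := ne_of_gt (sub_pos.mpr hx.1)
    have hqx : q - x ≠ 0 := ne_of_gt (sub_pos.mpr hx.2)
    simp only [hvBdef]
    field_simp
  have hBq : Tendsto vB (𝓝[Set.Ioo p q] q) (𝓝 0) := by
    have t1 : Tendsto (fun x : ℝ => p + q - 2*x) (𝓝[Set.Ioo p q] q) (𝓝 (p + q - 2*q)) :=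
      ((continuous_const.sub (continuous_const.mul continuous_id)).tendsto q).mono_left
        nhdsWithin_le_nhds
    have t2 : Tendsto (fun x => G x / (x - p)) (𝓝[Set.Ioo p q] q) (𝓝 (0 / (q - p))) := by
      apply Tendsto.div
      · have := (hGc q (Set.right_mem_Icc.mpr hpq.le)).tendsto
        rw [hGq] at this
        exact this.mono_left (nhdsWithin_mono q Set.Ioo_subset_Icc_self)
      · exact ((continuous_id.sub continuous_const).tendsto q).mono_left nhdsWithin_le_nhds
      · exact ne_of_gt hqp
    have t3 : Tendsto (fun x => G x / (x - q)) (𝓝[Set.Ioo p q] q) (𝓝 (F q)) :=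
      slope_q.mono_left (nhdsWithin_mono q Set.Ioo_subset_Iio_self)
    have tall := ((t1.mul t2).mul t3).neg
    rw [show -((p + q - 2*q) * (0 / (q-p)) * F q) = 0 by ring] at tall
    apply tall.congr'
    filter_upwards [self_mem_nhdsWithin] with x hx
    have hxp : x - p ≠ 0 := ne_of_gt (sub_pos.mpr hx.1)
    have hxq : x - q ≠ 0 := ne_of_lt (sub_neg.mpr hx.2)
    have hqx : q - x ≠ 0 := ne_of_gt (sub_pos.mpr hx.2)
    simp only [hvBdef]
    field_simp
    ring
  set J : ℝ := ∫ y in p..q, (y-p)*(q-y)*(f' y)^2 with hJdef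
  have hJnn : 0 ≤ J := intervalIntegral.integral_nonneg hpq.le
    (fun u hu => mul_nonneg (mul_nonneg (sub_nonneg.mpr hu.1) (sub_nonneg.mpr hu.2)) (sq_nonneg _))
  have hwint : IntervalIntegrable (fun y => (y-p)*(q-y)*(f' y)^2) volume p q :=
    intcc _ (((continuousOn_id.sub continuousOn_const).mul
      (continuousOn_const.sub continuousOn_id)).mul (hc.pow 2))
  have main : ∀ ε ∈ Set.Ioo (0:ℝ) ((q-p)/2),
      (∫ y in p+ε..q-ε, F y^2) ≤ (G (q-ε) * F (q-ε) - G (p+ε) * F (p+ε))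
        + Real.sqrt (((∫ y in p+ε..q-ε, F y^2) - (vB (q-ε) - vB (p+ε)))/2) * Real.sqrt J := by
    intro ε hε
    set p' := p + ε with hp'def
    set q' := q - ε with hq'def
    have hpp' : p < p' := by simp only [hp'def]; linarith [hε.1]
    have hq'q : q' < q := by simp only [hq'def]; linarith [hε.1]
    have hp'q' : p' < q' := by simp only [hp'def, hq'def]; linarith [hε.2]
    have hsub : Set.Icc p' q' ⊆ Set.Ioo p q := fun x hx => ⟨lt_of_lt_of_le hpp' hx.1, lt_of_le_of_lt hx.2 hq'q⟩
    have hsubIcc : Set.Icc p' q' ⊆ Set.Icc p q := hsub.trans Set.Ioo_subset_Icc_self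
    have hIcc' : Set.uIcc p' q' = Set.Icc p' q' := Set.uIcc_of_le hp'q'.le
    have intcc' : ∀ (g : ℝ → ℝ), ContinuousOn g (Set.Icc p' q') → IntervalIntegrable g volume p' q' := by
      intro g hg; apply ContinuousOn.intervalIntegrable; rwa [hIcc']
    have hFc' : ContinuousOn F (Set.Icc p' q') := hFc.mono hsubIcc
    have hGc' : ContinuousOn G (Set.Icc p' q') := hGc.mono hsubIcc
    have hfc' : ContinuousOn f' (Set.Icc p' q') := hc.mono hsubIcc
    have hwpos : ∀ x ∈ Set.Icc p' q', 0 < (x-p)*(q-x) :=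
      fun x hx => mul_pos (sub_pos.mpr (hsub hx).1) (sub_pos.mpr (hsub hx).2)
    have hwc : ContinuousOn (fun x => (x-p)*(q-x)) (Set.Icc p' q') :=
      (continuousOn_id.sub continuousOn_const).mul (continuousOn_const.sub continuousOn_id)
    have hwne : ∀ x ∈ Set.Icc p' q', (x-p)*(q-x) ≠ 0 := fun x hx => ne_of_gt (hwpos x hx)
    have hrc : ContinuousOn (fun x => (p+q-2*x)/((x-p)*(q-x))) (Set.Icc p' q') :=
      (continuousOn_const.sub (continuousOn_const.mul continuousOn_id)).div hwc hwne
    -- integration by parts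
    have parts : (∫ y in p'..q', (F y^2 + G y * f' y)) = G q' * F q' - G p' * F p' := by
      refine intervalIntegral.integral_eq_sub_of_hasDerivAt (f := fun y => G y * F y) ?_ ?_
      · intro x hx
        rw [hIcc'] at hx
        have h1 := (hGd x (hsub hx)).fun_mul (hFd x (hsubIcc hx))
        refine h1.congr_deriv ?_; ring
      · apply ContinuousOn.intervalIntegrable
        rw [hIcc']
        exact (hFc'.pow 2).add (hGc'.mul hfc')
    have iF2 : IntervalIntegrable (fun y => F y^2) volume p' q' := intcc' _ (hFc'.pow 2)
    have iGf : IntervalIntegrable (fun y => G y * f' y) volume p' q' := intcc' _ (hGc'.mul hfc')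
    have parts' : (∫ y in p'..q', F y^2) = (G q' * F q' - G p' * F p') - ∫ y in p'..q', G y * f' y := by
      rw [← parts, intervalIntegral.integral_add iF2 iGf]; ring
    -- Hardy step
    have iG2w : IntervalIntegrable (fun y => (G y)^2/((y-p)*(q-y))) volume p' q' :=
      intcc' _ ((hGc'.pow 2).div hwc hwne)
    have iRes : IntervalIntegrable (fun y => (F y - (p+q-2*y)/((y-p)*(q-y)) * G y)^2) volume p' q' :=
      intcc' _ ((hFc'.sub (hrc.mul hGc')).pow 2)
    have hardy : (∫ y in p'..q', (F y^2 - 2*((G y)^2/((y-p)*(q-y)))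
        - (F y - (p+q-2*y)/((y-p)*(q-y)) * G y)^2)) = vB q' - vB p' := by
      refine intervalIntegral.integral_eq_sub_of_hasDerivAt (f := vB) ?_ ?_
      · intro x hx
        rw [hIcc'] at hx
        exact hBderiv x (hsub hx)
      · apply ContinuousOn.intervalIntegrable
        rw [hIcc']
        exact ((hFc'.pow 2).sub (continuousOn_const.mul ((hGc'.pow 2).div hwc hwne))).sub
          ((hFc'.sub (hrc.mul hGc')).pow 2)
    have hres : 0 ≤ ∫ y in p'..q', (F y - (p+q-2*y)/((y-p)*(q-y)) * G y)^2 :=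
      intervalIntegral.integral_nonneg hp'q'.le (fun u _ => sq_nonneg _)
    have esplit : (∫ y in p'..q', (F y^2 - 2*((G y)^2/((y-p)*(q-y)))
        - (F y - (p+q-2*y)/((y-p)*(q-y)) * G y)^2))
        = (∫ y in p'..q', F y^2) - 2*(∫ y in p'..q', (G y)^2/((y-p)*(q-y)))
          - ∫ y in p'..q', (F y - (p+q-2*y)/((y-p)*(q-y)) * G y)^2 := by
      rw [intervalIntegral.integral_sub (iF2.sub (IntervalIntegrable.const_mul iG2w 2)) iRes,
        intervalIntegral.integral_sub iF2 (IntervalIntegrable.const_mul iG2w 2),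
        intervalIntegral.integral_const_mul]
    have hardy' : 2 * (∫ y in p'..q', (G y)^2/((y-p)*(q-y)))
        ≤ (∫ y in p'..q', F y^2) - (vB q' - vB p') := by
      rw [esplit] at hardy
      linarith
    -- Cauchy-Schwarz
    have hsqrtc : ContinuousOn (fun x => Real.sqrt ((x-p)*(q-x))) (Set.Icc p' q') :=
      Real.continuous_sqrt.comp_continuousOn hwc
    have hsne : ∀ x ∈ Set.Icc p' q', Real.sqrt ((x-p)*(q-x)) ≠ 0 :=
      fun x hx => ne_of_gt (Real.sqrt_pos.mpr (hwpos x hx))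
    have cs := cs_int p' q' hp'q'.le (fun x => G x / Real.sqrt ((x-p)*(q-x)))
      (fun x => Real.sqrt ((x-p)*(q-x)) * f' x) (hGc'.div hsqrtc hsne) (hsqrtc.mul hfc')
    have e1 : (∫ x in p'..q', (G x / Real.sqrt ((x-p)*(q-x))) * (Real.sqrt ((x-p)*(q-x)) * f' x))
        = ∫ y in p'..q', G y * f' y := by
      apply intervalIntegral.integral_congr
      rw [hIcc']
      intro x hx
      field_simp [hsne x hx]
    have e2 : (∫ x in p'..q', (G x / Real.sqrt ((x-p)*(q-x)))^2)
        = ∫ y in p'..q', (G y)^2/((y-p)*(q-y)) := by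
      apply intervalIntegral.integral_congr
      rw [hIcc']
      intro x hx
      dsimp only
      rw [div_pow, Real.sq_sqrt (le_of_lt (hwpos x hx))]
    have e3 : (∫ x in p'..q', (Real.sqrt ((x-p)*(q-x)) * f' x)^2)
        = ∫ y in p'..q', (y-p)*(q-y)*(f' y)^2 := by
      apply intervalIntegral.integral_congr
      rw [hIcc']
      intro x hx
      dsimp only
      rw [mul_pow, Real.sq_sqrt (le_of_lt (hwpos x hx))]
    rw [e1, e2, e3] at cs
    have hHnn : 0 ≤ ∫ y in p'..q', (G y)^2/((y-p)*(q-y)) :=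
      intervalIntegral.integral_nonneg hp'q'.le
        (fun u hu => div_nonneg (sq_nonneg _) (le_of_lt (hwpos u hu)))
    have hJ' : (∫ y in p'..q', (y-p)*(q-y)*(f' y)^2) ≤ J := by
      apply intervalIntegral.integral_mono_interval hpp'.le hp'q'.le hq'q.le ?_ hwint
      filter_upwards [ae_restrict_mem measurableSet_Ioc] with y hy
      exact mul_nonneg (mul_nonneg (sub_nonneg.mpr hy.1.le) (sub_nonneg.mpr hy.2)) (sq_nonneg _)
    have hGf2 : (∫ y in p'..q', G y * f' y)^2
        ≤ (∫ y in p'..q', (G y)^2/((y-p)*(q-y))) * J :=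
      le_trans cs (mul_le_mul_of_nonneg_left hJ' hHnn)
    -- combine
    have habs : -(∫ y in p'..q', G y * f' y) ≤ Real.sqrt ((∫ y in p'..q', (G y)^2/((y-p)*(q-y))) * J) := by
      have h1 : -(∫ y in p'..q', G y * f' y) ≤ |∫ y in p'..q', G y * f' y| := neg_le_abs _
      have h2 : |∫ y in p'..q', G y * f' y| = Real.sqrt ((∫ y in p'..q', G y * f' y)^2) :=
        (Real.sqrt_sq_eq_abs _).symm
      rw [h2] at h1
      exact le_trans h1 (Real.sqrt_le_sqrt hGf2)
    have hfin : Real.sqrt ((∫ y in p'..q', (G y)^2/((y-p)*(q-y))) * J)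
        ≤ Real.sqrt (((∫ y in p'..q', F y^2) - (vB q' - vB p'))/2) * Real.sqrt J := by
      rw [Real.sqrt_mul hHnn]
      apply mul_le_mul_of_nonneg_right ?_ (Real.sqrt_nonneg J)
      apply Real.sqrt_le_sqrt
      linarith
    calc (∫ y in p'..q', F y^2)
        = (G q' * F q' - G p' * F p') - ∫ y in p'..q', G y * f' y := parts'
      _ ≤ (G q' * F q' - G p' * F p')
          + Real.sqrt (((∫ y in p'..q', F y^2) - (vB q' - vB p'))/2) * Real.sqrt J := by
          have := le_trans habs hfin
          linarith
  -- pass to the limit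
  have hhalf : (0:ℝ) < (q-p)/2 := by linarith
  have hmemE : Set.Ioo (0:ℝ) ((q-p)/2) ∈ 𝓝[>] (0:ℝ) :=
    Ioo_mem_nhdsGT_of_mem (Set.left_mem_Ico.mpr hhalf)
  have tx1 : Tendsto (fun ε : ℝ => p + ε) (𝓝[>] 0) (𝓝[Set.Ioo p q] p) := by
    apply tendsto_nhdsWithin_of_tendsto_nhds_of_eventually_within
    · have h0 : Tendsto (fun ε : ℝ => p + ε) (𝓝 0) (𝓝 (p + 0)) :=
        (continuous_const.add continuous_id).tendsto 0
      rw [add_zero] at h0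
      exact h0.mono_left nhdsWithin_le_nhds
    · filter_upwards [hmemE] with ε hε
      exact ⟨by linarith [hε.1], by linarith [hε.2]⟩
  have tx2 : Tendsto (fun ε : ℝ => q - ε) (𝓝[>] 0) (𝓝[Set.Ioo p q] q) := by
    apply tendsto_nhdsWithin_of_tendsto_nhds_of_eventually_within
    · have h0 : Tendsto (fun ε : ℝ => q - ε) (𝓝 0) (𝓝 (q - 0)) :=
        (continuous_const.sub continuous_id).tendsto 0
      rw [sub_zero] at h0
      exact h0.mono_left nhdsWithin_le_nhds
    · filter_upwards [hmemE] with ε hε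
      exact ⟨by linarith [hε.1, hε.2], by linarith [hε.1]⟩
  have tx1' : Tendsto (fun ε : ℝ => p + ε) (𝓝[>] 0) (𝓝[Set.Icc p q] p) :=
    tx1.mono_right (nhdsWithin_mono p Set.Ioo_subset_Icc_self)
  have tx2' : Tendsto (fun ε : ℝ => q - ε) (𝓝[>] 0) (𝓝[Set.Icc p q] q) :=
    tx2.mono_right (nhdsWithin_mono q Set.Ioo_subset_Icc_self)
  have cGp : Tendsto G (𝓝[Set.Icc p q] p) (𝓝 0) := by
    have := (hGc p (Set.left_mem_Icc.mpr hpq.le)).tendsto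
    rwa [hGp] at this
  have cGq : Tendsto G (𝓝[Set.Icc p q] q) (𝓝 0) := by
    have := (hGc q (Set.right_mem_Icc.mpr hpq.le)).tendsto
    rwa [hGq] at this
  have cFp : Tendsto F (𝓝[Set.Icc p q] p) (𝓝 (F p)) :=
    (hFc p (Set.left_mem_Icc.mpr hpq.le)).tendsto
  have cFq : Tendsto F (𝓝[Set.Icc p q] q) (𝓝 (F q)) :=
    (hFc q (Set.right_mem_Icc.mpr hpq.le)).tendsto
  have hη : Tendsto (fun ε => G (q-ε) * F (q-ε) - G (p+ε) * F (p+ε)) (𝓝[>] (0:ℝ)) (𝓝 0) := by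
    have := ((cGq.comp tx2').mul (cFq.comp tx2')).sub ((cGp.comp tx1').mul (cFp.comp tx1'))
    simpa using this
  have hδ : Tendsto (fun ε => vB (q-ε) - vB (p+ε)) (𝓝[>] (0:ℝ)) (𝓝 0) := by
    have := (hBq.comp tx2).sub (hBp.comp tx1)
    simpa using this
  -- convergence of the truncated integrals
  set Φ : ℝ → ℝ := fun x => ∫ t in p..x, F t^2 with hΦdef
  have hF2i : IntervalIntegrable (fun y => F y^2) volume p q := intcc _ (hFc.pow 2)
  have hΦc : ContinuousOn Φ (Set.Icc p q) := by
    have := intervalIntegral.continuousOn_primitive_interval' hF2i Set.left_mem_uIcc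
    rwa [hIcc] at this
  have hIeq : ∀ᶠ ε in 𝓝[>] (0:ℝ), Φ (q-ε) - Φ (p+ε) = (∫ y in p+ε..q-ε, F y^2) := by
    filter_upwards [hmemE] with ε hε
    apply intervalIntegral.integral_interval_sub_left
    · apply hF2i.mono_set
      rw [hIcc, Set.uIcc_of_le (by linarith [hε.1, hε.2] : p ≤ q - ε)]
      exact Set.Icc_subset_Icc le_rfl (by linarith [hε.1])
    · apply hF2i.mono_set
      rw [hIcc, Set.uIcc_of_le (by linarith [hε.1] : p ≤ p + ε)]
      exact Set.Icc_subset_Icc le_rfl (by linarith [hε.2])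
  have hΦp : Φ p = 0 := intervalIntegral.integral_same
  have hI : Tendsto (fun ε => ∫ y in (p+ε)..(q-ε), F y^2) (𝓝[>] (0:ℝ)) (𝓝 (∫ y in p..q, F y^2)) := by
    have h1 : Tendsto (fun ε => Φ (q-ε) - Φ (p+ε)) (𝓝[>] (0:ℝ)) (𝓝 (Φ q - Φ p)) :=
      (((hΦc q (Set.right_mem_Icc.mpr hpq.le)).tendsto).comp tx2').sub
        (((hΦc p (Set.left_mem_Icc.mpr hpq.le)).tendsto).comp tx1')
    rw [hΦp, sub_zero] at h1
    exact h1.congr' hIeq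
  set I : ℝ := ∫ y in p..q, F y^2 with hIdef
  have hInn : 0 ≤ I := intervalIntegral.integral_nonneg hpq.le (fun u _ => sq_nonneg _)
  have hRHS : Tendsto (fun ε => (G (q-ε) * F (q-ε) - G (p+ε) * F (p+ε))
      + Real.sqrt (((∫ y in p+ε..q-ε, F y^2) - (vB (q-ε) - vB (p+ε)))/2) * Real.sqrt J)
      (𝓝[>] (0:ℝ)) (𝓝 (0 + Real.sqrt ((I - 0)/2) * Real.sqrt J)) := by
    apply hη.add
    apply Tendsto.mul ?_ tendsto_const_nhds
    exact ((Real.continuous_sqrt.tendsto _).comp (((hI.sub hδ)).div_const 2))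
  have hfinal : I ≤ 0 + Real.sqrt ((I - 0)/2) * Real.sqrt J := by
    apply le_of_tendsto_of_tendsto hI hRHS
    filter_upwards [hmemE] with ε hε
    exact main ε hε
  rw [zero_add, sub_zero] at hfinal
  have hs : Real.sqrt (I/2)^2 = I/2 := Real.sq_sqrt (by linarith)
  have ht : Real.sqrt J^2 = J := Real.sq_sqrt hJnn
  have goal : I ≤ 1/2 * J := by
    nlinarith [hfinal, Real.sqrt_nonneg (I/2), Real.sqrt_nonneg J, hs, ht,
      sq_nonneg (2*Real.sqrt (I/2) - Real.sqrt J)]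
  exact goal


/-- Poincaré-type inequality on a compact interval with optimal constant 1/2. -/
theorem poincare_type_inequality (c d : ℝ) (hcd : c < d) (f : ℝ → ℝ)
    (hf : ContDiffOn ℝ 1 f (Set.Ioo c d))
    (hint : IntervalIntegrable (fun y => (y - c) * (d - y) * |deriv f y| ^ 2) volume c d) :
    (∫ y in c..d, |f y - (1 / (d - c)) * ∫ z in c..d, f z| ^ 2) ≤
      (1 / 2) * ∫ y in c..d, (y - c) * (d - y) * |deriv f y| ^ 2 := by
  have hdc : (0:ℝ) < d - c := sub_pos.mpr hcd
  set a : ℝ := (1 / (d - c)) * ∫ z in c..d, f z with hadef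
  have hRHSnn : 0 ≤ (1 / 2) * ∫ y in c..d, (y - c) * (d - y) * |deriv f y| ^ 2 := by
    apply mul_nonneg (by norm_num)
    exact intervalIntegral.integral_nonneg hcd.le
      (fun u hu => mul_nonneg (mul_nonneg (sub_nonneg.mpr hu.1) (sub_nonneg.mpr hu.2)) (sq_nonneg _))
  -- trivial case : LHS integrand not integrable
  by_cases hL : IntervalIntegrable (fun y => |f y - a| ^ 2) volume c d
  swap
  · rw [intervalIntegral.integral_undef hL]
    exact hRHSnn
  -- main case
  have hL2 : IntervalIntegrable (fun y => (f y - a) ^ 2) volume c d := by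
    have : (fun y => (f y - a)^2) = fun y => |f y - a|^2 := by
      funext y; rw [sq_abs]
    rw [this]; exact hL
  -- f is interval integrable since (f-a)^2 is
  have hmeas : AEStronglyMeasurable (fun y => f y - a) (volume.restrict (Set.Ioc c d)) := by
    have h1 : AEStronglyMeasurable (fun y => f y - a) (volume.restrict (Set.Ioo c d)) :=
      (hf.continuousOn.sub continuousOn_const).aestronglyMeasurable measurableSet_Ioo
    rwa [Measure.restrict_congr_set Ioo_ae_eq_Ioc] at h1
  have hfa : IntervalIntegrable (fun y => f y - a) volume c d := by
    rw [intervalIntegrable_iff_integrableOn_Ioc_of_le hcd.le] at hL2 ⊢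
    apply Integrable.mono' ((integrable_const (1:ℝ)).add hL2) hmeas
    apply Filter.Eventually.of_forall
    intro y
    have h1 : |f y - a| ≤ 1 + (f y - a)^2 := by nlinarith [sq_nonneg (|f y - a| - 1), abs_nonneg (f y - a), sq_abs (f y - a)]
    simpa [Real.norm_eq_abs] using h1
  have hfint : IntervalIntegrable f volume c d := by
    have := hfa.add (_root_.intervalIntegrable_const (c := a))
    simpa using this
  set Φ1 : ℝ → ℝ := fun x => ∫ t in c..x, f t with hΦ1def
  set Φ2 : ℝ → ℝ := fun x => ∫ t in c..x, (f t - a)^2 with hΦ2def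
  have hIcc : Set.uIcc c d = Set.Icc c d := Set.uIcc_of_le hcd.le
  have hΦ1c : ContinuousOn Φ1 (Set.Icc c d) := by
    have := intervalIntegral.continuousOn_primitive_interval' hfint Set.left_mem_uIcc
    rwa [hIcc] at this
  have hΦ2c : ContinuousOn Φ2 (Set.Icc c d) := by
    have := intervalIntegral.continuousOn_primitive_interval' hL2 Set.left_mem_uIcc
    rwa [hIcc] at this
  have hderiv : ∀ x ∈ Set.Ioo c d, HasDerivAt f (deriv f x) x := fun x hx =>
    ((hf.differentiableOn one_ne_zero x hx).differentiableAt (Ioo_mem_nhds hx.1 hx.2)).hasDerivAt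
  have hdcont : ContinuousOn (deriv f) (Set.Ioo c d) :=
    hf.continuousOn_deriv_of_isOpen isOpen_Ioo le_rfl
  have main : ∀ ε ∈ Set.Ioo (0:ℝ) ((d-c)/2),
      Φ2 (d-ε) - Φ2 (c+ε) ≤ (1/2) * (∫ y in c..d, (y - c) * (d - y) * |deriv f y| ^ 2)
        + ((d-ε)-(c+ε)) * ((1/((d-ε)-(c+ε)) * ∫ z in (c+ε)..(d-ε), f z) - a)^2 := by
    intro ε hε
    set p := c + ε with hpdef
    set q := d - ε with hqdef
    have hcp : c < p := by simp only [hpdef]; linarith [hε.1]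
    have hqd : q < d := by simp only [hqdef]; linarith [hε.1]
    have hpq : p < q := by simp only [hpdef, hqdef]; linarith [hε.2]
    have hqp0 : q - p ≠ 0 := ne_of_gt (sub_pos.mpr hpq)
    have hsubIoo : Set.Icc p q ⊆ Set.Ioo c d :=
      fun x hx => ⟨lt_of_lt_of_le hcp hx.1, lt_of_le_of_lt hx.2 hqd⟩
    have hIccpq : Set.uIcc p q = Set.Icc p q := Set.uIcc_of_le hpq.le
    have intpq : ∀ (g : ℝ → ℝ), ContinuousOn g (Set.Icc p q) → IntervalIntegrable g volume p q := by
      intro g hg; apply ContinuousOn.intervalIntegrable; rwa [hIccpq]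
    have hfCpq : ContinuousOn f (Set.Icc p q) := hf.continuousOn.mono hsubIoo
    have hdCpq : ContinuousOn (deriv f) (Set.Icc p q) := hdcont.mono hsubIoo
    have key := core p q hpq f (deriv f) (fun x hx => hderiv x (hsubIoo hx)) hdCpq
    -- weight comparison on [p,q]
    have hw : (∫ y in p..q, (y-p)*(q-y)*(deriv f y)^2)
        ≤ ∫ y in p..q, (y-c)*(d-y)*|deriv f y|^2 := by
      apply intervalIntegral.integral_mono_on hpq.le
        (intpq _ (((continuousOn_id.sub continuousOn_const).mul
          (continuousOn_const.sub continuousOn_id)).mul (hdCpq.pow 2)))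
        (intpq _ (((continuousOn_id.sub continuousOn_const).mul
          (continuousOn_const.sub continuousOn_id)).mul ((hdCpq.abs).pow 2)))
      intro x hx
      show (id x - p)*(q - id x)*(deriv f x)^2 ≤ (id x - c)*(d - id x)*|deriv f x|^2
      rw [sq_abs]
      apply mul_le_mul_of_nonneg_right ?_ (sq_nonneg _)
      have h1 : (0:ℝ) ≤ x - p := sub_nonneg.mpr hx.1
      have h2 : (0:ℝ) ≤ q - x := sub_nonneg.mpr hx.2
      simp only [id_eq]
      apply mul_le_mul (by simp only [hpdef] at h1 ⊢; linarith [hε.1])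
        (by simp only [hqdef] at h2 ⊢; linarith [hε.1]) h2
        (by simp only [hpdef] at h1 ⊢; linarith [hε.1])
    have hw2 : (∫ y in p..q, (y-c)*(d-y)*|deriv f y|^2)
        ≤ ∫ y in c..d, (y-c)*(d-y)*|deriv f y|^2 := by
      apply intervalIntegral.integral_mono_interval hcp.le hpq.le hqd.le ?_ hint
      filter_upwards [ae_restrict_mem measurableSet_Ioc] with y hy
      exact mul_nonneg (mul_nonneg (sub_nonneg.mpr hy.1.le) (sub_nonneg.mpr hy.2)) (sq_nonneg _)
    -- decomposition of the L² distance
    have hfpq : IntervalIntegrable f volume p q := intpq _ hfCpq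
    have hsplit : (∫ y in p..q, (f y - a)^2)
        = (∫ y in p..q, (f y - (1/(q-p)) * ∫ z in p..q, f z)^2)
          + (q-p)*(((1/(q-p)) * ∫ z in p..q, f z) - a)^2 := by
      set Aε : ℝ := (1/(q-p)) * ∫ z in p..q, f z with hAedef
      have hAe : (q - p) * Aε = ∫ z in p..q, f z := by
        rw [hAedef]; field_simp
      have e : ∀ y, (f y - a)^2 = (f y - Aε)^2 + ((2*(Aε - a)) * f y + (a^2 - Aε^2)) :=
        fun y => by ring
      rw [intervalIntegral.integral_congr (fun y _ => e y)]
      rw [intervalIntegral.integral_add (intpq (fun y => (f y - Aε)^2) ((hfCpq.sub continuousOn_const).pow 2))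
        ((hfpq.const_mul _).add (_root_.intervalIntegrable_const)),
        intervalIntegral.integral_add (hfpq.const_mul _) (_root_.intervalIntegrable_const),
        intervalIntegral.integral_const_mul, intervalIntegral.integral_const]
      rw [smul_eq_mul, ← hAe]
      ring
    have hΦ2eq : Φ2 q - Φ2 p = ∫ y in p..q, (f y - a)^2 := by
      apply intervalIntegral.integral_interval_sub_left
      · apply hL2.mono_set
        rw [hIcc, Set.uIcc_of_le (le_of_lt (lt_trans hcp hpq))]
        exact Set.Icc_subset_Icc le_rfl hqd.le
      · apply hL2.mono_set
        rw [hIcc, Set.uIcc_of_le hcp.le]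
        exact Set.Icc_subset_Icc le_rfl (le_of_lt (lt_trans hpq hqd))
    rw [hΦ2eq, hsplit]
    have step : (∫ y in p..q, (f y - (1/(q-p)) * ∫ z in p..q, f z)^2)
        ≤ (1/2) * ∫ y in c..d, (y - c) * (d - y) * |deriv f y| ^ 2 := by
      calc (∫ y in p..q, (f y - (1/(q-p)) * ∫ z in p..q, f z)^2)
          ≤ (1/2) * ∫ y in p..q, (y-p)*(q-y)*(deriv f y)^2 := key
        _ ≤ (1/2) * ∫ y in c..d, (y - c) * (d - y) * |deriv f y| ^ 2 := by linarith [hw, hw2]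
    linarith [step]
  -- pass to the limit ε → 0⁺
  have hhalf : (0:ℝ) < (d-c)/2 := by linarith
  have hmemE : Set.Ioo (0:ℝ) ((d-c)/2) ∈ 𝓝[>] (0:ℝ) :=
    Ioo_mem_nhdsGT_of_mem (Set.left_mem_Ico.mpr hhalf)
  have tp : Tendsto (fun ε : ℝ => c + ε) (𝓝[>] 0) (𝓝[Set.Icc c d] c) := by
    apply tendsto_nhdsWithin_of_tendsto_nhds_of_eventually_within
    · have h0 : Tendsto (fun ε : ℝ => c + ε) (𝓝 0) (𝓝 (c + 0)) :=
        (continuous_const.add continuous_id).tendsto 0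
      rw [add_zero] at h0
      exact h0.mono_left nhdsWithin_le_nhds
    · filter_upwards [hmemE] with ε hε
      exact ⟨by linarith [hε.1], by linarith [hε.2]⟩
  have tq : Tendsto (fun ε : ℝ => d - ε) (𝓝[>] 0) (𝓝[Set.Icc c d] d) := by
    apply tendsto_nhdsWithin_of_tendsto_nhds_of_eventually_within
    · have h0 : Tendsto (fun ε : ℝ => d - ε) (𝓝 0) (𝓝 (d - 0)) :=
        (continuous_const.sub continuous_id).tendsto 0
      rw [sub_zero] at h0
      exact h0.mono_left nhdsWithin_le_nhds
    · filter_upwards [hmemE] with ε hε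
      exact ⟨by linarith [hε.1, hε.2], by linarith [hε.1]⟩
  have l1 : Tendsto (fun ε => Φ2 (d-ε) - Φ2 (c+ε)) (𝓝[>] (0:ℝ)) (𝓝 (Φ2 d - Φ2 c)) :=
    (((hΦ2c d (Set.right_mem_Icc.mpr hcd.le)).tendsto).comp tq).sub
      (((hΦ2c c (Set.left_mem_Icc.mpr hcd.le)).tendsto).comp tp)
  have hΦ2c0 : Φ2 c = 0 := intervalIntegral.integral_same
  have hΦ1c0 : Φ1 c = 0 := intervalIntegral.integral_same
  rw [hΦ2c0, sub_zero] at l1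
  -- the correction term tends to 0
  have l2 : Tendsto (fun ε => ((d-ε)-(c+ε)) * ((1/((d-ε)-(c+ε)) * ∫ z in (c+ε)..(d-ε), f z) - a)^2)
      (𝓝[>] (0:ℝ)) (𝓝 0) := by
    have hfeq : ∀ᶠ ε in 𝓝[>] (0:ℝ), Φ1 (d-ε) - Φ1 (c+ε) = ∫ z in (c+ε)..(d-ε), f z := by
      filter_upwards [hmemE] with ε hε
      apply intervalIntegral.integral_interval_sub_left
      · apply hfint.mono_set
        rw [hIcc, Set.uIcc_of_le (by linarith [hε.1, hε.2] : c ≤ d - ε)]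
        exact Set.Icc_subset_Icc le_rfl (by linarith [hε.1])
      · apply hfint.mono_set
        rw [hIcc, Set.uIcc_of_le (by linarith [hε.1] : c ≤ c + ε)]
        exact Set.Icc_subset_Icc le_rfl (by linarith [hε.2])
    have lΦ1 : Tendsto (fun ε => Φ1 (d-ε) - Φ1 (c+ε)) (𝓝[>] (0:ℝ)) (𝓝 (Φ1 d - Φ1 c)) :=
      (((hΦ1c d (Set.right_mem_Icc.mpr hcd.le)).tendsto).comp tq).sub
        (((hΦ1c c (Set.left_mem_Icc.mpr hcd.le)).tendsto).comp tp)
    rw [hΦ1c0, sub_zero] at lΦ1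
    have lint : Tendsto (fun ε => ∫ z in (c+ε)..(d-ε), f z) (𝓝[>] (0:ℝ)) (𝓝 (Φ1 d)) :=
      lΦ1.congr' hfeq
    have lqp : Tendsto (fun ε : ℝ => (d-ε)-(c+ε)) (𝓝[>] (0:ℝ)) (𝓝 (d - c)) := by
      have h0 : Tendsto (fun ε : ℝ => (d-ε)-(c+ε)) (𝓝 0) (𝓝 ((d-0)-(c+0))) :=
        ((continuous_const.sub continuous_id).sub (continuous_const.add continuous_id)).tendsto 0
      rw [show (d-(0:ℝ))-(c+0) = d - c by ring] at h0
      exact h0.mono_left nhdsWithin_le_nhds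
    have linv : Tendsto (fun ε : ℝ => 1/((d-ε)-(c+ε))) (𝓝[>] (0:ℝ)) (𝓝 (1/(d-c))) :=
      Tendsto.div tendsto_const_nhds lqp (ne_of_gt hdc)
    have lA : Tendsto (fun ε => (1/((d-ε)-(c+ε)) * ∫ z in (c+ε)..(d-ε), f z))
        (𝓝[>] (0:ℝ)) (𝓝 (1/(d-c) * Φ1 d)) := linv.mul lint
    have hAa : 1/(d-c) * Φ1 d = a := by rw [hadef]
    rw [hAa] at lA
    have := lqp.mul (((lA.sub (tendsto_const_nhds (x := a)))).pow 2)
    simpa using this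
  have final : Φ2 d ≤ (1/2) * (∫ y in c..d, (y - c) * (d - y) * |deriv f y| ^ 2) + 0 := by
    apply le_of_tendsto_of_tendsto l1 (Tendsto.const_add _ l2)
    filter_upwards [hmemE] with ε hε
    exact main ε hε
  have hgoal : (∫ y in c..d, |f y - a| ^ 2) = Φ2 d := by
    apply intervalIntegral.integral_congr
    intro y _
    dsimp only
    rw [sq_abs]
  rw [hgoal]
  linarith [final]
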